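/- Let g : (0,∞) → ℝ be C², with g(r) = −ln(r)/(2π) for all r ≥ 1, such that G(x) := g(|x|) extends to a C² function on ℝ² (in particular r g'(r) → 0 as r → 0⁺). Then π ∫_{ℝ²} (−ΔG)(x) · (x · ∇G(x)) dx = −1/4. -/

import Mathlib

open Real MeasureTheory

section aux

variable {F : Type*} [NormedAddCommGroup F] [InnerProductSpace ℝ F]

lemma my_hasFDerivAt_norm {x : F} (hx : x ≠ 0) :
    HasFDerivAt (fun y : F => ‖y‖) (‖x‖⁻¹ • innerSL ℝ x) x := by
  have hr : (0:ℝ) < ‖x‖ := norm_pos_iff.mpr hx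
  have h1 : HasFDerivAt (fun y : F => ‖y‖ ^ 2) (2 • innerSL ℝ x) x :=
    (hasStrictFDerivAt_norm_sq x).hasFDerivAt
  have h2 : HasDerivAt Real.sqrt (1 / (2 * Real.sqrt (‖x‖ ^ 2))) (‖x‖ ^ 2) :=
    Real.hasDerivAt_sqrt (by positivity)
  have h3 := h2.comp_hasFDerivAt x h1
  have hsq : Real.sqrt (‖x‖ ^ 2) = ‖x‖ := Real.sqrt_sq (norm_nonneg x)
  have hfun : (Real.sqrt ∘ fun y : F => ‖y‖ ^ 2) = fun y : F => ‖y‖ := by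
    funext y; simp [Function.comp, Real.sqrt_sq (norm_nonneg y)]
  rw [hfun] at h3
  refine h3.congr_fderiv ?_
  rw [hsq]
  ext v
  simp [smul_smul]
  field_simp

end aux

/-- The Laplacian on `ℝ²` as the sum of the two repeated directional derivatives. -/
noncomputable def lap (G : EuclideanSpace ℝ (Fin 2) → ℝ) (x : EuclideanSpace ℝ (Fin 2)) : ℝ :=
  ∑ i : Fin 2,
    fderiv ℝ (fun y => fderiv ℝ G y (EuclideanSpace.single i (1:ℝ))) x
      (EuclideanSpace.single i (1:ℝ))

section radial
variable {g : ℝ → ℝ} (hg : ContDiffOn ℝ 2 g (Set.Ioi (0:ℝ)))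
  {G : EuclideanSpace ℝ (Fin 2) → ℝ} (hGdef : ∀ x, G x = g ‖x‖)

include hg in
lemma g_hasDerivAt {r : ℝ} (hr : 0 < r) : HasDerivAt g (deriv g r) r := by
  have := ((hg.differentiableOn (by norm_num)).differentiableAt
    (Ioi_mem_nhds hr)).hasDerivAt
  exact this

include hg in
lemma g1_hasDerivAt {r : ℝ} (hr : 0 < r) :
    HasDerivAt (deriv g) (deriv (deriv g) r) r := by
  have h1 : ContDiffOn ℝ 1 (deriv g) (Set.Ioi 0) :=
    hg.deriv_of_isOpen isOpen_Ioi (by norm_num)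
  exact ((h1.differentiableOn (by norm_num)).differentiableAt
    (Ioi_mem_nhds hr)).hasDerivAt

include hg hGdef in
lemma G_hasFDerivAt {x : EuclideanSpace ℝ (Fin 2)} (hx : x ≠ 0) :
    HasFDerivAt G ((deriv g ‖x‖) • (‖x‖⁻¹ • innerSL ℝ x)) x := by
  have hr : (0:ℝ) < ‖x‖ := norm_pos_iff.mpr hx
  have h := (g_hasDerivAt hg hr).comp_hasFDerivAt x (my_hasFDerivAt_norm hx)
  have : G = g ∘ fun y : EuclideanSpace ℝ (Fin 2) => ‖y‖ := funext hGdef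
  rw [this]; exact h

include hg hGdef in
lemma fderiv_G_apply {x : EuclideanSpace ℝ (Fin 2)} (hx : x ≠ 0)
    (v : EuclideanSpace ℝ (Fin 2)) :
    fderiv ℝ G x v = deriv g ‖x‖ * (‖x‖⁻¹ * (inner ℝ x v : ℝ)) := by
  rw [(G_hasFDerivAt hg hGdef hx).fderiv]
  simp

include hg hGdef in
lemma fderiv_G_self {x : EuclideanSpace ℝ (Fin 2)} (hx : x ≠ 0) :
    fderiv ℝ G x x = ‖x‖ * deriv g ‖x‖ := by
  have hr : (0:ℝ) < ‖x‖ := norm_pos_iff.mpr hx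
  rw [fderiv_G_apply hg hGdef hx x, real_inner_self_eq_norm_sq]
  field_simp

set_option maxHeartbeats 1000000 in
include hg hGdef in
lemma lap_radial {x : EuclideanSpace ℝ (Fin 2)} (hx : x ≠ 0) :
    lap G x = deriv (deriv g) ‖x‖ + deriv g ‖x‖ / ‖x‖ := by
  have hr : (0:ℝ) < ‖x‖ := norm_pos_iff.mpr hx
  have hN := my_hasFDerivAt_norm hx
  have h1 : HasFDerivAt (fun y : EuclideanSpace ℝ (Fin 2) => deriv g ‖y‖)
      ((deriv (deriv g) ‖x‖) • (‖x‖⁻¹ • innerSL ℝ x)) x :=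
    (g1_hasDerivAt hg hr).comp_hasFDerivAt x hN
  have h2 : HasFDerivAt (fun y : EuclideanSpace ℝ (Fin 2) => ‖y‖⁻¹)
      ((-(‖x‖ ^ 2)⁻¹) • (‖x‖⁻¹ • innerSL ℝ x)) x :=
    (hasDerivAt_inv hr.ne').comp_hasFDerivAt x hN
  have key : ∀ i : Fin 2,
      fderiv ℝ (fun y => fderiv ℝ G y (EuclideanSpace.single i (1:ℝ))) x
        (EuclideanSpace.single i (1:ℝ))
      = deriv (deriv g) ‖x‖ * (‖x‖⁻¹ * x i) * (‖x‖⁻¹ * x i)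
        + deriv g ‖x‖ * (‖x‖⁻¹ - (‖x‖^2)⁻¹ * (‖x‖⁻¹ * x i) * x i) := by
    intro i
    have h3 : HasFDerivAt (fun y : EuclideanSpace ℝ (Fin 2) => y i)
        (PiLp.proj (𝕜 := ℝ) 2 (fun _ : Fin 2 => ℝ) i) x := by
      exact (PiLp.proj (𝕜 := ℝ) 2 (fun _ : Fin 2 => ℝ) i).hasFDerivAt
    have h4 := h2.mul h3
    have h5 := h1.mul h4
    have heq : (fun y => fderiv ℝ G y (EuclideanSpace.single i (1:ℝ)))
        =ᶠ[nhds x] (fun y : EuclideanSpace ℝ (Fin 2) => deriv g ‖y‖ * (‖y‖⁻¹ * y i)) := by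
      filter_upwards [isOpen_compl_singleton.mem_nhds hx] with y hy
      have hy' : y ≠ 0 := hy
      have hi : (inner ℝ y (EuclideanSpace.single i (1:ℝ)) : ℝ) = y i := by
        simp [EuclideanSpace.inner_single_right]
      rw [fderiv_G_apply hg hGdef hy', hi]
    rw [heq.fderiv_eq, show (fun y : EuclideanSpace ℝ (Fin 2) => deriv g ‖y‖ * (‖y‖⁻¹ * y i))
      = ((fun y => deriv g ‖y‖) * ((fun y => ‖y‖⁻¹) * fun y => y i)) from rfl, h5.fderiv]
    simp only [ContinuousLinearMap.add_apply, ContinuousLinearMap.coe_smul',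
      Pi.smul_apply, Pi.mul_apply, smul_eq_mul, innerSL_apply_apply, EuclideanSpace.inner_single_right,
      map_one, ContinuousLinearMap.smul_apply]
    have hp : (PiLp.proj (𝕜 := ℝ) 2 (fun _ : Fin 2 => ℝ) i)
        (EuclideanSpace.single i (1:ℝ)) = 1 := by
      simp [EuclideanSpace.single_apply]
    rw [hp]
    simp only [starRingEnd_apply, star_trivial]
    ring
  have hsum : x 0 ^ 2 + x 1 ^ 2 = ‖x‖ ^ 2 := by
    rw [EuclideanSpace.norm_eq, Real.sq_sqrt (by positivity)]
    simp [Fin.sum_univ_two, sq_abs]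
  unfold lap
  rw [Fin.sum_univ_two, key 0, key 1]
  field_simp
  linear_combination (deriv (deriv g) ‖x‖ * ‖x‖ - deriv g ‖x‖) * hsum

end radial

section outside
variable {g : ℝ → ℝ} (hout : ∀ r : ℝ, 1 ≤ r → g r = - Real.log r / (2 * π))

include hout in
lemma deriv_g_out {r : ℝ} (hr : 1 < r) : deriv g r = -1 / (2 * π * r) := by
  have hev : g =ᶠ[nhds r] fun s => - Real.log s / (2 * π) := by
    filter_upwards [Ioi_mem_nhds hr] with s hs
    exact hout s (le_of_lt hs)
  have hd : HasDerivAt (fun s : ℝ => - Real.log s / (2 * π)) (-(r⁻¹) / (2 * π)) r :=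
    ((Real.hasDerivAt_log (by positivity)).neg).div_const _
  rw [hev.deriv_eq, hd.deriv]
  field_simp

include hout in
lemma deriv2_g_out {r : ℝ} (hr : 1 < r) :
    deriv (deriv g) r = 1 / (2 * π * r ^ 2) := by
  have hev : deriv g =ᶠ[nhds r] fun s => -1 / (2 * π * s) := by
    filter_upwards [Ioi_mem_nhds hr] with s hs
    exact deriv_g_out hout hs
  have hd : HasDerivAt (fun s : ℝ => -1 / (2 * π * s)) (1 / (2 * π * r ^ 2)) r := by
    have h1 : HasDerivAt (fun s : ℝ => s⁻¹) (-(r ^ 2)⁻¹) r := hasDerivAt_inv (by positivity)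
    have h2 := h1.const_mul (-1 / (2 * π))
    have hf : (fun s : ℝ => -1 / (2 * π * s)) = fun s : ℝ => -1 / (2 * π) * s⁻¹ := by
      funext s
      field_simp
    rw [hf]
    refine h2.congr_deriv ?_
    have hπ : π ≠ 0 := pi_ne_zero
    have hr0 : r ≠ 0 := (by linarith : (0:ℝ) < r).ne'
    field_simp
  rw [hev.deriv_eq, hd.deriv]

end outside

/-- For a radial C² deformation `G` of the free Green's function agreeing with
`−ln r/(2π)` for `r ≥ 1`, one has `π ∫ (−ΔG)(x) (x·∇G(x)) dx = −1/4`. -/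
theorem stmt_9 (g : ℝ → ℝ)
    (hg : ContDiffOn ℝ 2 g (Set.Ioi (0:ℝ)))
    (hout : ∀ r : ℝ, 1 ≤ r → g r = - Real.log r / (2 * π))
    (G : EuclideanSpace ℝ (Fin 2) → ℝ)
    (hGdef : ∀ x, G x = g ‖x‖)
    (hG : ContDiff ℝ 2 G) :
    π * ∫ x : EuclideanSpace ℝ (Fin 2), (-(lap G x)) * (fderiv ℝ G x x) = -1/4 := by
  have hπ : π ≠ 0 := pi_ne_zero
  set e₀ : EuclideanSpace ℝ (Fin 2) := EuclideanSpace.single 0 (1:ℝ) with he₀def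
  have he₀ : ‖e₀‖ = 1 := by simp [he₀def]
  have he₀ne : e₀ ≠ 0 := by
    intro h
    rw [h, norm_zero] at he₀
    norm_num at he₀
  have hsm : ∀ r : ℝ, 0 ≤ r → ‖r • e₀‖ = r := by
    intro r hr
    rw [norm_smul, he₀, mul_one, Real.norm_eq_abs, abs_of_nonneg hr]
  have hsmne : ∀ r : ℝ, 0 < r → r • e₀ ≠ 0 := fun r hr => smul_ne_zero hr.ne' he₀ne
  set F : ℝ → ℝ := fun r => (-(lap G (r • e₀))) * (fderiv ℝ G (r • e₀) (r • e₀)) with hF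
  -- the integrand is radial
  have hrad : ∀ x : EuclideanSpace ℝ (Fin 2),
      (-(lap G x)) * (fderiv ℝ G x x) = F ‖x‖ := by
    intro x
    by_cases hx : x = 0
    · rw [hx]
      simp only [hF, norm_zero, zero_smul]
    · have hxn : (0:ℝ) < ‖x‖ := norm_pos_iff.mpr hx
      have hx' : ‖x‖ • e₀ ≠ 0 := hsmne _ hxn
      have hn : ‖‖x‖ • e₀‖ = ‖x‖ := hsm _ hxn.le
      rw [hF]
      simp only
      rw [lap_radial hg hGdef hx, fderiv_G_self hg hGdef hx,
          lap_radial hg hGdef hx', fderiv_G_self hg hGdef hx', hn]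
  -- continuity facts
  have hcontfd : Continuous (fderiv ℝ G) := hG.continuous_fderiv (by norm_num)
  have hcontU : Continuous fun r : ℝ => fderiv ℝ G (r • e₀) (r • e₀) := by
    have h1 : Continuous fun r : ℝ => (r • e₀ : EuclideanSpace ℝ (Fin 2)) :=
      continuous_id.smul continuous_const
    exact (hcontfd.comp h1).clm_apply h1
  have hcontlap : Continuous (lap G) := by
    apply continuous_finset_sum
    intro i _
    have h1 : ContDiff ℝ 1 (fderiv ℝ G) := hG.fderiv_right (by norm_num)
    have h2 : ContDiff ℝ 1 (fun y => fderiv ℝ G y (EuclideanSpace.single i (1:ℝ))) :=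
      (ContinuousLinearMap.apply ℝ ℝ (EuclideanSpace.single i (1:ℝ))).contDiff.comp h1
    exact (h2.continuous_fderiv (by norm_num)).clm_apply continuous_const
  have hcontF : Continuous F := by
    have h1 : Continuous fun r : ℝ => (r • e₀ : EuclideanSpace ℝ (Fin 2)) :=
      continuous_id.smul continuous_const
    exact ((hcontlap.comp h1).neg).mul hcontU
  -- the 1D integrand
  set Φ : ℝ → ℝ := fun r => r * F r with hΦ
  have hΦcont : Continuous Φ := continuous_id.mul hcontF
  have hΦeq : ∀ r : ℝ, 0 < r →
      Φ r = -((deriv g r + r * deriv (deriv g) r) * (r * deriv g r)) := by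
    intro r hr
    have hx' : r • e₀ ≠ 0 := hsmne _ hr
    have hn : ‖r • e₀‖ = r := hsm _ hr.le
    simp only [hΦ, hF]
    rw [lap_radial hg hGdef hx', fderiv_G_self hg hGdef hx', hn]
    field_simp
    ring
  have hΦzero : ∀ r : ℝ, 2 < r → Φ r = 0 := by
    intro r hr
    have hr1 : (1:ℝ) < r := by linarith
    have hr0 : (0:ℝ) < r := by linarith
    rw [hΦeq r hr0, deriv_g_out hout hr1, deriv2_g_out hout hr1]
    field_simp
    ring
  -- the potential for the FTC
  set v : ℝ → ℝ := fun r => (fderiv ℝ G (r • e₀) (r • e₀)) ^ 2 / 2 with hv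
  have hvcont : Continuous v := (hcontU.pow 2).div_const 2
  have hv0 : v 0 = 0 := by
    simp only [hv, zero_smul]
    simp
  have hv2 : v 2 = 1 / (8 * π ^ 2) := by
    have hx' : (2:ℝ) • e₀ ≠ 0 := hsmne _ (by norm_num)
    have hn : ‖(2:ℝ) • e₀‖ = 2 := hsm _ (by norm_num)
    simp only [hv]
    rw [fderiv_G_self hg hGdef hx', hn, deriv_g_out hout (by norm_num : (1:ℝ) < 2)]
    field_simp
    ring
  have hvd : ∀ r ∈ Set.Ioo (0:ℝ) 2, HasDerivAt v (-(Φ r)) r := by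
    intro r hr
    have hr0 : (0:ℝ) < r := hr.1
    have hvev : v =ᶠ[nhds r] fun s => (s * deriv g s) ^ 2 / 2 := by
      filter_upwards [Ioi_mem_nhds hr0] with s hs
      have hs0 : (0:ℝ) < s := hs
      simp only [hv]
      rw [fderiv_G_self hg hGdef (hsmne _ hs0), hsm _ hs0.le]
    have hud : HasDerivAt (fun s : ℝ => (s * deriv g s) ^ 2 / 2)
        ((deriv g r + r * deriv (deriv g) r) * (r * deriv g r)) r := by
      have h1 : HasDerivAt (fun s : ℝ => s * deriv g s)
          (1 * deriv g r + r * deriv (deriv g) r) r :=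
        (hasDerivAt_id r).mul (g1_hasDerivAt hg hr0)
      have h2 := (h1.pow 2).div_const 2
      refine h2.congr_deriv ?_
      ring
    have := hud.congr_of_eventuallyEq hvev
    rw [hΦeq r hr0]
    simpa using this
  -- FTC on [0,2]
  have hFTC : ∫ r in (0:ℝ)..2, -(Φ r) = v 2 - v 0 := by
    apply intervalIntegral.integral_eq_sub_of_hasDeriv_right_of_le (by norm_num)
      hvcont.continuousOn
      (fun r hr => (hvd r hr).hasDerivWithinAt)
    exact (hΦcont.neg).intervalIntegrable 0 2
  have hIoc : ∫ r in Set.Ioc (0:ℝ) 2, Φ r = -(1 / (8 * π ^ 2)) := by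
    have h1 : ∫ r in (0:ℝ)..2, -(Φ r) = -∫ r in (0:ℝ)..2, Φ r := by
      simp [intervalIntegral.integral_neg]
    have h2 : ∫ r in (0:ℝ)..2, Φ r = ∫ r in Set.Ioc (0:ℝ) 2, Φ r :=
      intervalIntegral.integral_of_le (by norm_num)
    rw [h1, hv2, hv0, h2] at hFTC
    linarith
  have hIoi2 : ∫ r in Set.Ioi (2:ℝ), Φ r = 0 := by
    rw [setIntegral_congr_fun measurableSet_Ioi (fun r hr => hΦzero r hr)]
    simp
  have hsplit : ∫ r in Set.Ioi (0:ℝ), Φ r = -(1 / (8 * π ^ 2)) := by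
    rw [← Set.Ioc_union_Ioi_eq_Ioi (by norm_num : (0:ℝ) ≤ 2),
      setIntegral_union (Set.Ioc_disjoint_Ioi le_rfl) measurableSet_Ioi
        (hΦcont.integrableOn_Ioc)
        ((integrableOn_congr_fun (fun r hr => hΦzero r hr) measurableSet_Ioi).mpr
          (integrableOn_zero))]
    rw [hIoc, hIoi2]
    ring
  -- polar-type reduction of the 2D integral
  have hmain := integral_fun_norm_addHaar
    (volume : Measure (EuclideanSpace ℝ (Fin 2))) F
  rw [finrank_euclideanSpace_fin] at hmain
  have hvol : (volume (Metric.ball (0 : EuclideanSpace ℝ (Fin 2)) 1)).toReal = π := by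
    rw [EuclideanSpace.volume_ball]
    simp only [Fintype.card_fin]
    norm_num
    exact Real.sq_sqrt pi_pos.le
  have hintF : ∫ y in Set.Ioi (0:ℝ), y ^ (2 - 1) • F y = -(1 / (8 * π ^ 2)) := by
    rw [← hsplit]
    apply setIntegral_congr_fun measurableSet_Ioi
    intro r _
    simp [hΦ]
  have hbody : (fun x : EuclideanSpace ℝ (Fin 2) => (-(lap G x)) * (fderiv ℝ G x x))
      = fun x => F ‖x‖ := funext hrad
  rw [hbody, hmain, measureReal_def, hvol, hintF]
  simp only [nsmul_eq_mul, smul_eq_mul, Nat.cast_ofNat]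
  field_simp
  ring
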